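/- Let α ∈ (1,2], β ∈ (0,1), ξ ∈ (0,1). Then: (i) for every continuous y : [0,1] → ℝ, the function t ↦ ∫₀¹ G(t,s) y(s) ds is continuous on [0,1]; and (ii) the function t ↦ ∫₀¹ |G(t,s)| ds is bounded on [0,1], so that G* = sup_{t ∈ [0,1]} ∫₀¹ |G(t,s)| ds is a finite real number (even though, when α − β < 1, the Green function G(t,s) itself is unbounded). -/

import Mathlib

set_option maxHeartbeats 1000000


open Real MeasureTheory Set

/-- The Green function of the fractional boundary value problem. -/
noncomputable def G (α β ξ : ℝ) (t s : ℝ) : ℝ :=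
  if s ≤ t then
    ((1 - ξ) * (t - s) ^ (α - 1) + ξ * (1 - s) ^ (α - 1)) / (Real.Gamma α * (1 - ξ))
      - Real.Gamma (2 - β) * (ξ + (1 - ξ) * t) * (1 - s) ^ (α - β - 1)
          / (Real.Gamma (α - β) * (1 - ξ))
  else
    ξ * (1 - s) ^ (α - 1) / (Real.Gamma α * (1 - ξ))
      - Real.Gamma (2 - β) * (ξ + (1 - ξ) * t) * (1 - s) ^ (α - β - 1)
          / (Real.Gamma (α - β) * (1 - ξ))

/-- `G* = sup_{t ∈ [0,1]} ∫₀¹ |G(t,s)| ds`. -/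
noncomputable def Gstar (α β ξ : ℝ) : ℝ :=
  ⨆ t : Set.Icc (0 : ℝ) 1, ∫ s in (0 : ℝ)..1, |G α β ξ (t : ℝ) s|

/-- (i) `t ↦ ∫₀¹ G(t,s) y(s) ds` is continuous on `[0,1]` for every continuous `y`, and
(ii) `t ↦ ∫₀¹ |G(t,s)| ds` is bounded on `[0,1]`, so `G*` is a finite real number. -/
theorem green_integral_continuous_and_bounded (α β ξ : ℝ) (hα : 1 < α ∧ α ≤ 2)
    (hβ : 0 < β ∧ β < 1) (hξ : 0 < ξ ∧ ξ < 1) :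
    (∀ y : ℝ → ℝ, ContinuousOn y (Set.Icc 0 1) →
        ContinuousOn (fun t => ∫ s in (0 : ℝ)..1, G α β ξ t s * y s) (Set.Icc 0 1))
      ∧ ∃ M : ℝ, ∀ t ∈ Set.Icc (0 : ℝ) 1, (∫ s in (0 : ℝ)..1, |G α β ξ t s|) ≤ M := by
  obtain ⟨hα1, hα2⟩ := hα
  obtain ⟨hβ0, hβ1⟩ := hβ
  obtain ⟨hξ0, hξ1⟩ := hξ
  have h1ξ : 0 < 1 - ξ := by linarith
  have hΓα : 0 < Real.Gamma α := Real.Gamma_pos_of_pos (by linarith)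
  have hΓαβ : 0 < Real.Gamma (α - β) := Real.Gamma_pos_of_pos (by linarith)
  have hΓ2β : 0 < Real.Gamma (2 - β) := Real.Gamma_pos_of_pos (by linarith)
  have hD1 : 0 < Real.Gamma α * (1 - ξ) := mul_pos hΓα h1ξ
  have hD2 : 0 < Real.Gamma (α - β) * (1 - ξ) := mul_pos hΓαβ h1ξ
  set bound : ℝ → ℝ := fun s =>
    1 / (Real.Gamma α * (1 - ξ))
      + Real.Gamma (2 - β) / (Real.Gamma (α - β) * (1 - ξ)) * (1 - s) ^ (α - β - 1)
    with hbound_def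
  -- rewrite G without the `if`
  have hEq : ∀ t s : ℝ, G α β ξ t s =
      (1 - ξ) * (max (t - s) 0) ^ (α - 1) / (Real.Gamma α * (1 - ξ))
        + ξ * (1 - s) ^ (α - 1) / (Real.Gamma α * (1 - ξ))
        - Real.Gamma (2 - β) * (ξ + (1 - ξ) * t) * (1 - s) ^ (α - β - 1)
            / (Real.Gamma (α - β) * (1 - ξ)) := by
    intro t s
    unfold G
    by_cases h : s ≤ t
    · rw [if_pos h, max_eq_left (by linarith : (0:ℝ) ≤ t - s)]
      ring
    · rw [if_neg h, max_eq_right (by linarith [not_le.mp h] : t - s ≤ 0),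
        Real.zero_rpow (by linarith : α - 1 ≠ 0)]
      ring
  -- pointwise bound
  have hGbound : ∀ t ∈ Set.Icc (0:ℝ) 1, ∀ s ∈ Set.Icc (0:ℝ) 1,
      |G α β ξ t s| ≤ bound s := by
    intro t ht s hs
    obtain ⟨ht0, ht1⟩ := ht
    obtain ⟨hs0, hs1⟩ := hs
    rw [hEq]
    set q := (max (t - s) 0) ^ (α - 1) with hq
    set p := (1 - s) ^ (α - 1) with hp
    set r := (1 - s) ^ (α - β - 1) with hr
    have hq0 : 0 ≤ q := Real.rpow_nonneg (le_max_right _ _) _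
    have hq1 : q ≤ 1 :=
      Real.rpow_le_one (le_max_right _ _) (max_le (by linarith) (by norm_num)) (by linarith)
    have hp0 : 0 ≤ p := Real.rpow_nonneg (by linarith) _
    have hp1 : p ≤ 1 := Real.rpow_le_one (by linarith) (by linarith) (by linarith)
    have hr0 : 0 ≤ r := Real.rpow_nonneg (by linarith) _
    have hA0 : 0 ≤ (1 - ξ) * q / (Real.Gamma α * (1 - ξ))
        + ξ * p / (Real.Gamma α * (1 - ξ)) := by positivity
    have hA1 : (1 - ξ) * q / (Real.Gamma α * (1 - ξ))
        + ξ * p / (Real.Gamma α * (1 - ξ)) ≤ 1 / (Real.Gamma α * (1 - ξ)) := by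
      rw [← add_div]
      exact (div_le_div_iff_of_pos_right hD1).mpr (by nlinarith)
    have hB0 : 0 ≤ Real.Gamma (2 - β) * (ξ + (1 - ξ) * t) * (1 - s) ^ (α - β - 1)
        / (Real.Gamma (α - β) * (1 - ξ)) := by
      apply div_nonneg _ hD2.le
      have : (0:ℝ) ≤ ξ + (1 - ξ) * t := by nlinarith
      exact mul_nonneg (mul_nonneg hΓ2β.le this) hr0
    have hB1 : Real.Gamma (2 - β) * (ξ + (1 - ξ) * t) * (1 - s) ^ (α - β - 1)
        / (Real.Gamma (α - β) * (1 - ξ))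
        ≤ Real.Gamma (2 - β) / (Real.Gamma (α - β) * (1 - ξ)) * r := by
      rw [div_mul_eq_mul_div]
      apply (div_le_div_iff_of_pos_right hD2).mpr
      have h1 : ξ + (1 - ξ) * t ≤ 1 := by nlinarith
      have h2 : (0:ℝ) ≤ ξ + (1 - ξ) * t := by nlinarith
      rw [← hr]
      nlinarith [mul_nonneg hΓ2β.le hr0]
    rw [hbound_def]
    exact abs_le.mpr ⟨by dsimp only; linarith, by dsimp only; linarith⟩
  have hbound_nonneg : ∀ s ∈ Set.Icc (0:ℝ) 1, 0 ≤ bound s := by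
    intro s hs
    have : (0:ℝ) ≤ (1 - s) ^ (α - β - 1) := Real.rpow_nonneg (by linarith [hs.2]) _
    have h1 : (0:ℝ) < 1 / (Real.Gamma α * (1 - ξ)) := by positivity
    have h2 : (0:ℝ) ≤ Real.Gamma (2 - β) / (Real.Gamma (α - β) * (1 - ξ)) := by positivity
    simp only [hbound_def]
    nlinarith
  -- integrability of the bound
  have hbound_int : IntervalIntegrable bound volume 0 1 := by
    apply IntervalIntegrable.add (intervalIntegrable_const)
    apply IntervalIntegrable.const_mul
    have h := intervalIntegral.intervalIntegrable_rpow'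
      (a := 0) (b := 1) (r := α - β - 1) (by linarith)
    simpa using (h.comp_sub_left 1).symm
  -- measurability of G in s
  have hGmeas : ∀ t : ℝ, Measurable (fun s => G α β ξ t s) := by
    intro t
    unfold G
    apply Measurable.ite (measurableSet_le measurable_id measurable_const)
    · apply Measurable.sub
      · exact ((measurable_const.mul ((measurable_const.sub measurable_id).pow_const _)).add
          (measurable_const.mul ((measurable_const.sub measurable_id).pow_const _))).div_const _
      · exact (measurable_const.mul ((measurable_const.sub measurable_id).pow_const _)).div_const _
    · apply Measurable.sub
      · exact (measurable_const.mul ((measurable_const.sub measurable_id).pow_const _)).div_const _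
      · exact (measurable_const.mul ((measurable_const.sub measurable_id).pow_const _)).div_const _
  -- continuity of G in t
  have hGcont : ∀ s : ℝ, Continuous (fun t => G α β ξ t s) := by
    intro s
    have hcr : Continuous (fun u : ℝ => u ^ (α - 1)) := by
      rw [continuous_iff_continuousAt]
      intro x
      exact Real.continuousAt_rpow_const x _ (Or.inr (by linarith))
    have hK : Continuous (fun t : ℝ => (max (t - s) 0) ^ (α - 1)) :=
      hcr.comp ((continuous_id.sub continuous_const).max continuous_const)
    have : Continuous (fun t : ℝ =>
        (1 - ξ) * (max (t - s) 0) ^ (α - 1) / (Real.Gamma α * (1 - ξ))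
        + ξ * (1 - s) ^ (α - 1) / (Real.Gamma α * (1 - ξ))
        - Real.Gamma (2 - β) * (ξ + (1 - ξ) * t) * (1 - s) ^ (α - β - 1)
            / (Real.Gamma (α - β) * (1 - ξ))) := by
      apply Continuous.sub
      · exact ((continuous_const.mul hK).div_const _).add continuous_const
      · exact (((continuous_const.mul
          (continuous_const.add (continuous_const.mul continuous_id))).mul
          continuous_const).div_const _)
    convert this using 2 with t
    exact hEq t s
  have huIoc : Set.uIoc (0:ℝ) 1 = Set.Ioc 0 1 := Set.uIoc_of_le zero_le_one
  -- interval integrability of G t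
  have hGint : ∀ t ∈ Set.Icc (0:ℝ) 1,
      IntervalIntegrable (fun s => G α β ξ t s) volume 0 1 := by
    intro t ht
    apply hbound_int.mono_fun' ((hGmeas t).aestronglyMeasurable)
    rw [huIoc]
    filter_upwards [ae_restrict_mem measurableSet_Ioc] with s hs
    exact hGbound t ht s (Set.Ioc_subset_Icc_self hs)
  constructor
  · -- part (i)
    intro y hy
    obtain ⟨C, hC⟩ := isCompact_Icc.exists_bound_of_continuousOn hy
    have hy_meas : AEStronglyMeasurable y (volume.restrict (Set.uIoc (0:ℝ) 1)) := by
      rw [huIoc]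
      exact (hy.mono Set.Ioc_subset_Icc_self).aestronglyMeasurable measurableSet_Ioc
    intro t₀ ht₀
    apply intervalIntegral.continuousWithinAt_of_dominated_interval
      (bound := fun s => bound s * max C 0)
    · exact Filter.Eventually.of_forall fun t =>
        ((hGmeas t).aestronglyMeasurable).mul hy_meas
    · filter_upwards [eventually_mem_nhdsWithin] with t ht
      apply Filter.Eventually.of_forall
      intro s hs
      rw [huIoc] at hs
      have hsI : s ∈ Set.Icc (0:ℝ) 1 := Set.Ioc_subset_Icc_self hs
      rw [norm_mul]
      have h1 : ‖G α β ξ t s‖ ≤ bound s := hGbound t ht s hsI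
      have h2 : ‖y s‖ ≤ max C 0 := le_trans (hC s hsI) (le_max_left _ _)
      exact mul_le_mul h1 h2 (norm_nonneg _) (hbound_nonneg s hsI)
    · exact hbound_int.mul_const _
    · filter_upwards with s hs
      exact (((hGcont s).mul continuous_const).continuousAt).continuousWithinAt
  · -- part (ii)
    refine ⟨∫ s in (0:ℝ)..1, bound s, ?_⟩
    intro t ht
    apply intervalIntegral.integral_mono_on zero_le_one (hGint t ht).abs hbound_int
    intro s hs
    exact hGbound t ht s hs
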